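/- arXiv:1112.5545 — 4 statements merged into one kernel-verified Lean document; each statement's English description precedes it below -/
import Mathlib

section
/- Let σ be a continuous (atomless) probability Borel measure on the circle 𝕋 and let k ≥ 2. Define C_k : 𝕋^k → 𝕋 by C_k(z₁, …, z_k) = z₁ ⋯ z_k. Suppose there exists a Borel set E ⊆ 𝕋^k with σ^{⊗k}(E) = 1 on which C_k is one-to-one modulo coordinate permutations (i.e. for x, y ∈ E, C_k(x) = C_k(y) implies y is a coordinate permutation of x). Then there exists a Borel set F ⊆ 𝕋^{k−1} with σ^{⊗(k−1)}(F) = 1 on which C_{k−1} is one-to-one modulo coordinate permutations. -/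
open MeasureTheory

noncomputable instance : MeasurableSpace Circle := borel Circle
instance : BorelSpace Circle := ⟨rfl⟩

lemma perm_of_cons_perm {G : Type*} {n : ℕ} (x y : Fin n → G) (c : G)
    (π : Equiv.Perm (Fin (n + 1)))
    (h : ∀ i, (Fin.cons c y : Fin (n+1) → G) i = (Fin.cons c x : Fin (n+1) → G) (π i)) :
    ∃ ρ : Equiv.Perm (Fin n), ∀ i, y i = x (ρ i) := by
  set τ : Equiv.Perm (Fin (n + 1)) := π * Equiv.swap 0 (π⁻¹ 0) with hτ
  have hτ0 : τ 0 = 0 := by simp [hτ, Equiv.swap_apply_left]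
  have hτh : ∀ i, (Fin.cons c y : Fin (n+1) → G) i = (Fin.cons c x : Fin (n+1) → G) (τ i) := by
    intro i
    rcases eq_or_ne i 0 with rfl | hi0
    · rw [hτ0]; simp
    rcases eq_or_ne i (π⁻¹ 0) with rfl | hib
    · have h1 : τ (π⁻¹ 0) = π 0 := by simp [hτ, Equiv.swap_apply_right]
      have h2 : (Fin.cons c x : Fin (n+1) → G) (π 0) = c := (h 0).symm
      have h3 : (Fin.cons c y : Fin (n+1) → G) (π⁻¹ 0) = c := by
        rw [h (π⁻¹ 0)]; simp
      rw [h1, h2, h3]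
    · have : τ i = π i := by
        rw [hτ, Equiv.Perm.mul_apply, Equiv.swap_apply_of_ne_of_ne hi0 hib]
      rw [this]; exact h i
  have hne : ∀ i : Fin n, τ i.succ ≠ 0 := by
    intro i hi
    exact (Fin.succ_ne_zero i) (τ.injective (hi.trans hτ0.symm))
  let f : Fin n → Fin n := fun i => (τ i.succ).pred (hne i)
  have hfinj : Function.Injective f := by
    intro a b hab
    have : τ a.succ = τ b.succ := by
      have := congrArg Fin.succ hab
      simpa [f, Fin.succ_pred] using this
    exact Fin.succ_injective _ (τ.injective this)
  refine ⟨Equiv.ofBijective f (Finite.injective_iff_bijective.mp hfinj), fun i => ?_⟩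
  have := hτh i.succ
  have hsucc : τ i.succ = (f i).succ := by simp [f, Fin.succ_pred]
  rw [hsucc] at this
  simpa using this

/-- If `σ` is an atomless probability Borel measure on the circle, `k ≥ 2`, and the
product map `C_k(z) = z₁⋯z_k` is one-to-one modulo coordinate permutations on some Borel
set `E ⊆ 𝕋^k` of full `σ^{⊗k}`-measure, then `C_{k-1}` is one-to-one modulo coordinate
permutations on some Borel set `F ⊆ 𝕋^{k-1}` of full `σ^{⊗(k-1)}`-measure. -/
theorem stmt10 (σ : Measure Circle) [IsProbabilityMeasure σ]
    (hσ : ∀ x : Circle, σ {x} = 0) (k : ℕ) (hk : 2 ≤ k)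
    (E : Set (Fin k → Circle)) (hE : MeasurableSet E)
    (hE1 : Measure.pi (fun _ : Fin k => σ) E = 1)
    (hinj : ∀ x ∈ E, ∀ y ∈ E, ∏ i, x i = ∏ i, y i →
      ∃ π : Equiv.Perm (Fin k), ∀ i, y i = x (π i)) :
    ∃ F : Set (Fin (k - 1) → Circle), MeasurableSet F ∧
      Measure.pi (fun _ : Fin (k - 1) => σ) F = 1 ∧
      ∀ x ∈ F, ∀ y ∈ F, ∏ i, x i = ∏ i, y i →
        ∃ π : Equiv.Perm (Fin (k - 1)), ∀ i, y i = x (π i) := by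
  obtain ⟨n, rfl⟩ : ∃ n, k = n + 1 := ⟨k - 1, by omega⟩

  set μ : Measure (Fin n → Circle) := Measure.pi (fun _ : Fin n => σ) with hμ
  set e : (Fin (n + 1) → Circle) ≃ᵐ Circle × (Fin n → Circle) :=
    MeasurableEquiv.piFinSuccAbove (fun _ : Fin (n + 1) => Circle) 0 with he
  have hmp : MeasurePreserving e (Measure.pi fun _ : Fin (n+1) => σ) (σ.prod μ) :=
    measurePreserving_piFinSuccAbove (fun _ : Fin (n+1) => σ) 0
  -- E' in the product space
  set E' : Set (Circle × (Fin n → Circle)) := e.symm ⁻¹' E with hE'def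
  have hE'm : MeasurableSet E' := e.symm.measurable hE
  have hE'1 : (σ.prod μ) E' = 1 := by
    rw [hE'def, (hmp.symm e).measure_preimage hE.nullMeasurableSet, hE1]
  -- membership in E'
  have hmemE' : ∀ (c : Circle) (z : Fin n → Circle),
      (c, z) ∈ E' ↔ (Fin.cons c z : Fin (n+1) → Circle) ∈ E := by
    intro c z
    have : e.symm (c, z) = (Fin.cons c z : Fin (n+1) → Circle) := by
      show (Fin.insertNthEquiv (fun _ : Fin (n+1) => Circle) 0) (c, z) = _
      simp [Fin.insertNthEquiv, Fin.insertNth_zero']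
    simp [hE'def, Set.mem_preimage, this]
  -- swapped version
  set E'' : Set ((Fin n → Circle) × Circle) := Prod.swap ⁻¹' E' with hE''def
  have hE''m : MeasurableSet E'' := measurable_swap hE'm
  have hE''1 : (μ.prod σ) E'' = 1 := by
    rw [← Measure.prod_swap, Measure.map_apply measurable_swap hE''m]
    have : Prod.swap ⁻¹' E'' = E' := by
      ext p; simp [hE''def]
    rw [this, hE'1]
  -- the set F
  set F : Set (Fin n → Circle) := {z | σ (Prod.mk z ⁻¹' E'') = 1} with hFdef
  have hFm : MeasurableSet F := by
    exact (measurable_measure_prodMk_left hE''m) (measurableSet_singleton 1)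
  have hF1 : μ F = 1 := by
    have hcompl : (μ.prod σ) E''ᶜ = 0 := by
      rw [measure_compl hE''m (measure_ne_top _ _), hE''1, measure_univ]
      simp
    have hae := (Measure.measure_prod_null hE''m.compl).mp hcompl
    have h2 : ∀ᵐ z ∂μ, z ∈ F := by
      filter_upwards [hae] with z hz
      have hz0 : σ (Prod.mk z ⁻¹' E'')ᶜ = 0 := by
        simpa [Set.preimage_compl] using hz
      have h3 := measure_add_measure_compl (μ := σ) (measurable_prodMk_left (x := z) hE''m)
      rw [hz0, add_zero, measure_univ] at h3
      exact h3
    have hc : μ Fᶜ = 0 := by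
      rw [ae_iff] at h2
      simpa [Set.compl_def] using h2
    have h4 := measure_add_measure_compl (μ := μ) hFm
    rw [hc, add_zero, measure_univ] at h4
    exact h4
  refine ⟨F, hFm, hF1, ?_⟩
  intro x hx y hy hxy
  -- fibres over x and y intersect
  have hAx : σ (Prod.mk x ⁻¹' E'') = 1 := hx
  have hAy : σ (Prod.mk y ⁻¹' E'') = 1 := hy
  have hne : ((Prod.mk x ⁻¹' E'') ∩ (Prod.mk y ⁻¹' E'')).Nonempty := by
    by_contra hemp
    rw [Set.not_nonempty_iff_eq_empty] at hemp
    have hsub : (Prod.mk x ⁻¹' E'') ⊆ (Prod.mk y ⁻¹' E'')ᶜ :=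
      Set.subset_compl_iff_disjoint_right.mpr (Set.disjoint_iff_inter_eq_empty.mpr hemp)
    have hle := measure_mono (μ := σ) hsub
    rw [hAx] at hle
    have h0 : σ (Prod.mk y ⁻¹' E'')ᶜ = 0 := by
      rw [measure_compl (measurable_prodMk_left hE''m) (measure_ne_top σ _), hAy,
        measure_univ]
      simp
    rw [h0] at hle
    simp at hle
  obtain ⟨c, hcx, hcy⟩ := hne
  have hwx : (Fin.cons c x : Fin (n+1) → Circle) ∈ E := by
    have : (c, x) ∈ E' := hcx
    exact (hmemE' c x).mp this
  have hwy : (Fin.cons c y : Fin (n+1) → Circle) ∈ E := by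
    have : (c, y) ∈ E' := hcy
    exact (hmemE' c y).mp this
  have hprod : ∏ i, (Fin.cons c x : Fin (n+1) → Circle) i
      = ∏ i, (Fin.cons c y : Fin (n+1) → Circle) i := by
    rw [Fin.prod_cons, Fin.prod_cons]
    exact congrArg (c * ·) hxy
  obtain ⟨π, hπ⟩ := hinj _ hwx _ hwy hprod
  exact perm_of_cons_perm x y c π hπ
end

section
/- Let σ be a continuous (atomless) probability Borel measure on the circle 𝕋, let 1 ≤ m ≤ n be integers and a ∈ 𝕋, with (m, a) ≠ (n, 1). Suppose σ^{∗n} is not singular with respect to σ^{∗m} ∗ δ_a, where σ^{∗j} is the j-fold convolution power and δ_a the Dirac mass at a. Then for every Borel set F ⊆ 𝕋^{m+n} with σ^{⊗(m+n)}(F) = 1, the multiplication map C_{m+n}(z₁, …, z_{m+n}) = z₁⋯z_{m+n} is not one-to-one modulo coordinate permutations on F; that is, there exist x, y ∈ F with C_{m+n}(x) = C_{m+n}(y) such that y is not a coordinate permutation of x. -/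
open MeasureTheory

/-- The `j`-fold convolution power `σ^{∗j}` of a measure on the circle: the pushforward
of `σ^{⊗j}` under the product map `C_j`. -/
noncomputable def convPow (σ : Measure Circle) (j : ℕ) : Measure Circle :=
  Measure.map (fun z : Fin j → Circle => ∏ i, z i) (Measure.pi fun _ : Fin j => σ)

namespace Stmt11Aux

open Finset ProbabilityTheory

/-- The multiset of values of a tuple. -/
def M {k : ℕ} (f : Fin k → Circle) : Multiset Circle := Multiset.map f Finset.univ.val

lemma card_M {k : ℕ} (f : Fin k → Circle) : Multiset.card (M f) = k := by
  simp [M]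

lemma mem_M {k : ℕ} {f : Fin k → Circle} {c : Circle} : c ∈ M f ↔ ∃ i, f i = c := by
  simp [M, List.mem_ofFn]

lemma M_eq_sum {k : ℕ} (f : Fin k → Circle) :
    M f = ∑ i : Fin k, ({f i} : Multiset Circle) := by
  calc Multiset.map f Finset.univ.val
      = Multiset.mapAddMonoidHom f (∑ i : Fin k, ({i} : Multiset (Fin k))) := by
        rw [Finset.sum_multiset_singleton]; rfl
    _ = ∑ i : Fin k, Multiset.mapAddMonoidHom f ({i} : Multiset (Fin k)) := map_sum _ _ _
    _ = ∑ i : Fin k, ({f i} : Multiset Circle) := by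
        simp [Multiset.mapAddMonoidHom]

lemma M_append {m n : ℕ} (u : Fin m → Circle) (v : Fin n → Circle) :
    M (Fin.append u v) = M u + M v := by
  rw [M_eq_sum, M_eq_sum, M_eq_sum, Fin.sum_univ_add]
  simp [Fin.append_left, Fin.append_right]

lemma M_perm {N : ℕ} {x y : Fin N → Circle} (π : Equiv.Perm (Fin N))
    (h : ∀ i, y i = x (π i)) : M y = M x := by
  have hxy : y = x ∘ π := funext h
  have huniv : Multiset.map (⇑π) Finset.univ.val = Finset.univ.val := by
    have h3 := congrArg Finset.val (Finset.map_univ_equiv π)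
    simpa using h3
  rw [hxy, M, M]
  conv_rhs => rw [← huniv]
  rw [Multiset.map_map]

lemma prod_M {k : ℕ} (f : Fin k → Circle) : (M f).prod = ∏ i, f i :=
  (Finset.prod_eq_multiset_prod _ _).symm

lemma prod_append {m n : ℕ} (u : Fin m → Circle) (v : Fin n → Circle) :
    ∏ i, Fin.append u v i = (∏ i, u i) * ∏ i, v i := by
  rw [Fin.prod_univ_add]
  simp [Fin.append_left, Fin.append_right]

lemma le_aux {m n : ℕ} {p q : Fin m → Circle} {r r' : Fin n → Circle}
    (hd : ∀ i j, p i ≠ q j) (heq : M q + M r' = M p + M r) : M q ≤ M r := by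
  classical
  rw [Multiset.le_iff_count]
  intro c
  by_cases hc : ∃ j, q j = c
  · have hcu : Multiset.count c (M p) = 0 := by
      rw [Multiset.count_eq_zero]
      intro hmem
      obtain ⟨i, hi⟩ := mem_M.mp hmem
      obtain ⟨j, hj⟩ := hc
      exact hd i j (hi.trans hj.symm)
    have hcount := congrArg (Multiset.count c) heq
    simp only [Multiset.count_add, hcu, zero_add] at hcount
    omega
  · have : Multiset.count c (M q) = 0 := by
      rw [Multiset.count_eq_zero]; intro hmem; exact hc (mem_M.mp hmem)
    simp [this]

lemma key_multiset {m n : ℕ} {u u' : Fin m → Circle} {v v' : Fin n → Circle}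
    (hd : ∀ i j, u i ≠ u' j)
    (heq : M u' + M v' = M u + M v) :
    ∃ W : Multiset Circle, M v = M u' + W ∧ M v' = M u + W := by
  classical
  have h1 : M u' ≤ M v := le_aux hd heq
  have h2 : M u ≤ M v' := le_aux (fun i j h => hd j i h.symm) heq.symm
  have e1 : M u' + (M v - M u') = M v := add_tsub_cancel_of_le h1
  refine ⟨M v - M u', e1.symm, ?_⟩
  have h3 : M u' + M v' = M u' + (M u + (M v - M u')) :=
    calc M u' + M v' = M u + M v := heq
      _ = M u + (M u' + (M v - M u')) := by rw [e1]
      _ = M u' + (M u + (M v - M u')) := by rw [add_left_comm]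
  exact add_left_cancel h3

lemma measurable_finProd (k : ℕ) : Measurable fun z : Fin k → Circle => ∏ i, z i :=
  Finset.measurable_prod Finset.univ fun i _ => measurable_pi_apply i

lemma mSetEq {X : Type*} [MeasurableSpace X] {f g : X → Circle}
    (hf : Measurable f) (hg : Measurable g) : MeasurableSet {x | f x = g x} :=
  MeasureTheory.StronglyMeasurable.measurableSet_eq_fun hf.stronglyMeasurable hg.stronglyMeasurable

lemma measurable_append (m n : ℕ) :
    Measurable fun p : (Fin m → Circle) × (Fin n → Circle) => Fin.append p.1 p.2 := by
  refine measurable_pi_iff.mpr fun j => ?_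
  induction j using Fin.addCases with
  | left i =>
    simp only [Fin.append_left]
    exact (measurable_pi_apply _).comp measurable_fst
  | right i =>
    simp only [Fin.append_right]
    exact (measurable_pi_apply _).comp measurable_snd

lemma pi_hyper (σ : Measure Circle) [IsProbabilityMeasure σ] (hσ : ∀ x : Circle, σ {x} = 0)
    {k : ℕ} (i : Fin k) (c : Circle) :
    Measure.pi (fun _ : Fin k => σ) {z | z i = c} = 0 := by
  have : NullSingletonClass σ := ⟨hσ⟩
  exact Measure.pi_hyperplane (fun _ => σ) i c

lemma pi_pair_null (σ : Measure Circle) [IsProbabilityMeasure σ]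
    (hσ : ∀ x : Circle, σ {x} = 0) {k : ℕ} (i j : Fin k) (hij : i ≠ j) :
    Measure.pi (fun _ : Fin k => σ) {z | z i = z j} = 0 := by
  have : NoAtoms σ := ⟨hσ⟩
  obtain ⟨k', rfl⟩ : ∃ k', k = k' + 1 := ⟨k - 1, (Nat.succ_pred_eq_of_pos i.pos).symm⟩
  obtain ⟨j', hj'⟩ := Fin.exists_succAbove_eq hij.symm
  have hmp := measurePreserving_piFinSuccAbove (fun _ : Fin (k' + 1) => σ) i
  set e := MeasurableEquiv.piFinSuccAbove (fun _ : Fin (k' + 1) => Circle) i with he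
  have hBm : MeasurableSet {p : Circle × (Fin k' → Circle) | p.1 = p.2 j'} :=
    mSetEq measurable_fst ((measurable_pi_apply j').comp measurable_snd)
  have hpre : {z : Fin (k' + 1) → Circle | z i = z j} = e ⁻¹' {p | p.1 = p.2 j'} := by
    ext z
    simp only [Set.mem_setOf_eq, Set.mem_preimage]
    have h1 : (e z).1 = z i := rfl
    have h2 : (e z).2 j' = z (i.succAbove j') := rfl
    rw [h1, h2, hj']
  rw [hpre, hmp.measure_preimage hBm.nullMeasurableSet, Measure.prod_apply hBm]
  have hz : ∀ x : Circle,
      (Measure.pi fun _ : Fin k' => σ) {w : Fin k' → Circle | x = w j'} = 0 := by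
    intro x
    rw [show {w : Fin k' → Circle | x = w j'} = {w | w j' = x} from Set.ext fun _ => eq_comm]
    exact pi_hyper σ hσ j' x
  simp [hz]

lemma pi_map_append (σ : Measure Circle) [IsProbabilityMeasure σ] (m n : ℕ) :
    Measure.pi (fun _ : Fin (m + n) => σ) =
      Measure.map (fun p : (Fin m → Circle) × (Fin n → Circle) => Fin.append p.1 p.2)
        ((Measure.pi fun _ : Fin m => σ).prod (Measure.pi fun _ : Fin n => σ)) := by
  refine Measure.pi_eq fun s hs => ?_
  rw [Measure.map_apply (measurable_append m n) (MeasurableSet.univ_pi hs)]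
  have hpre : (fun p : (Fin m → Circle) × (Fin n → Circle) => Fin.append p.1 p.2) ⁻¹'
      (Set.univ.pi s)
      = (Set.univ.pi fun i => s (Fin.castAdd n i)) ×ˢ (Set.univ.pi fun i => s (Fin.natAdd m i)) := by
    ext ⟨u, v⟩
    simp only [Set.mem_preimage, Set.mem_pi, Set.mem_univ, true_implies, Set.mem_prod]
    constructor
    · intro h
      refine ⟨fun i => ?_, fun i => ?_⟩
      · have := h (Fin.castAdd n i); rwa [Fin.append_left] at this
      · have := h (Fin.natAdd m i); rwa [Fin.append_right] at this
    · rintro ⟨h1, h2⟩ j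
      induction j using Fin.addCases with
      | left i => rw [Fin.append_left]; exact h1 i
      | right i => rw [Fin.append_right]; exact h2 i
  rw [hpre, Measure.prod_prod, Measure.pi_pi, Measure.pi_pi, Fin.prod_univ_add]

end Stmt11Aux

open Stmt11Aux ProbabilityTheory

/-- Let `σ` be an atomless probability Borel measure on the circle, `1 ≤ m ≤ n`, `a ∈ 𝕋`,
with `(m, a) ≠ (n, 1)`. If `σ^{∗n}` is not singular with respect to `σ^{∗m} ∗ δ_a`, then
on no Borel set `F ⊆ 𝕋^{m+n}` of full `σ^{⊗(m+n)}`-measure is the product map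
one-to-one modulo coordinate permutations. -/
theorem stmt11 (σ : Measure Circle) [IsProbabilityMeasure σ]
    (hσ : ∀ x : Circle, σ {x} = 0)
    (m n : ℕ) (hm : 1 ≤ m) (hmn : m ≤ n) (a : Circle)
    (hma : ¬(m = n ∧ a = 1))
    (hns : ¬ (convPow σ n) ⟂ₘ
      (Measure.map (fun p : Circle × Circle => p.1 * p.2)
        ((convPow σ m).prod (Measure.dirac a))))
    (F : Set (Fin (m + n) → Circle)) (hF : MeasurableSet F)
    (hF1 : Measure.pi (fun _ : Fin (m + n) => σ) F = 1) :
    ∃ x ∈ F, ∃ y ∈ F, ∏ i, x i = ∏ i, y i ∧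
      ¬ ∃ π : Equiv.Perm (Fin (m + n)), ∀ i, y i = x (π i) := by
  classical
  by_contra hcon
  push_neg at hcon
  -- basic measures
  set μm : Measure (Fin m → Circle) := Measure.pi (fun _ : Fin m => σ) with hμm_def
  set μn : Measure (Fin n → Circle) := Measure.pi (fun _ : Fin n => σ) with hμn_def
  have hprobm : IsProbabilityMeasure (convPow σ m) := by
    unfold convPow; exact Measure.isProbabilityMeasure_map (measurable_finProd m).aemeasurable
  have hprobn : IsProbabilityMeasure (convPow σ n) := by
    unfold convPow; exact Measure.isProbabilityMeasure_map (measurable_finProd n).aemeasurable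
  set νn := convPow σ n with hνn_def
  set ν := Measure.map (fun p : Circle × Circle => p.1 * p.2)
    ((convPow σ m).prod (Measure.dirac a)) with hν_def
  have hmul : Measurable fun p : Circle × Circle => p.1 * p.2 := measurable_fst.mul measurable_snd
  have hpairc : Measurable fun x : Circle => (x, a) := measurable_id.prodMk measurable_const
  have hfm : Measurable fun u : Fin m → Circle => (∏ i, u i) * a :=
    (measurable_finProd m).mul_const a
  have hν_eq : ν = μm.map (fun u => (∏ i, u i) * a) := by
    rw [hν_def, Measure.prod_dirac, Measure.map_map hmul hpairc]
    show Measure.map _ (Measure.map _ (Measure.pi fun _ : Fin m => σ)) = _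
    rw [Measure.map_map (hmul.comp hpairc) (measurable_finProd m)]
    rfl
  -- the two joint distributions
  set Pm : Measure (Circle × (Fin m → Circle)) :=
    μm.map (fun u => ((∏ i, u i) * a, u)) with hPm_def
  have hPm_meas : Measurable fun u : Fin m → Circle => ((∏ i, u i) * a, u) :=
    hfm.prodMk measurable_id
  have hPm_prob : IsProbabilityMeasure Pm := Measure.isProbabilityMeasure_map hPm_meas.aemeasurable
  have hPm_fst : Pm.fst = ν := by
    rw [hPm_def, Measure.fst, Measure.map_map measurable_fst hPm_meas, hν_eq]
    rfl
  have hPm_univ : ∀ s : Set (Fin m → Circle), MeasurableSet s → Pm (Set.univ ×ˢ s) = μm s := by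
    intro s hs
    rw [hPm_def, Measure.map_apply hPm_meas (MeasurableSet.univ.prod hs)]
    congr 1
    ext u; simp
  set Pn : Measure (Circle × (Fin n → Circle)) :=
    μn.map (fun v => (∏ i, v i, v)) with hPn_def
  have hPn_meas : Measurable fun v : Fin n → Circle => (∏ i, v i, v) :=
    (measurable_finProd n).prodMk measurable_id
  have hPn_prob : IsProbabilityMeasure Pn := Measure.isProbabilityMeasure_map hPn_meas.aemeasurable
  have hPn_fst : Pn.fst = νn := by
    rw [hPn_def, Measure.fst, Measure.map_map measurable_fst hPn_meas, hνn_def]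
    rw [convPow]
    rfl
  have hPn_univ : ∀ s : Set (Fin n → Circle), MeasurableSet s → Pn (Set.univ ×ˢ s) = μn s := by
    intro s hs
    rw [hPn_def, Measure.map_apply hPn_meas (MeasurableSet.univ.prod hs)]
    congr 1
    ext v; simp
  -- disintegrations
  have hdism : ν ⊗ₘ Pm.condKernel = Pm := by rw [← hPm_fst]; exact Pm.disintegrate _
  have hdisn : νn ⊗ₘ Pn.condKernel = Pn := by rw [← hPn_fst]; exact Pn.disintegrate _
  -- the common part
  set η := ν.withDensity (νn.rnDeriv ν) with hη_def
  have hdec : νn = νn.singularPart ν + η := νn.haveLebesgueDecomposition_add ν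
  have hη0 : η ≠ 0 := by
    intro h0
    apply hns
    have hsing : νn = νn.singularPart ν := by
      conv_lhs => rw [hdec, h0]
      rw [add_zero]
    nth_rewrite 1 [hsing]
    exact Measure.mutuallySingular_singularPart νn ν
  have hην : η ≪ ν := withDensity_absolutelyContinuous ν _
  have hle : η ≤ νn := by rw [hdec]; exact Measure.le_add_left le_rfl
  have hηνn : η ≪ νn := hle.absolutelyContinuous
  have hηfin : IsFiniteMeasure η := isFiniteMeasure_of_le νn hle
  -- the coupling measure
  set κ := Pm.condKernel ×ₖ Pn.condKernel with hκ_def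
  set Q := η ⊗ₘ κ with hQ_def
  have hpu : Measurable fun ζ : Circle × ((Fin m → Circle) × (Fin n → Circle)) => ζ.2.1 :=
    measurable_snd.fst
  have hpw : Measurable fun ζ : Circle × ((Fin m → Circle) × (Fin n → Circle)) => ζ.2.2 :=
    measurable_snd.snd
  have key_m : ∀ S : Set (Circle × (Fin m → Circle)), MeasurableSet S → Pm S = 0 →
      Q {ζ : Circle × ((Fin m → Circle) × (Fin n → Circle)) | (ζ.1, ζ.2.1) ∈ S} = 0 := by
    intro S hS hS0
    have hint : ∫⁻ t, Pm.condKernel t (Prod.mk t ⁻¹' S) ∂ν = 0 := by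
      rw [← Measure.compProd_apply hS, hdism]; exact hS0
    have hmeasf : Measurable fun t => Pm.condKernel t (Prod.mk t ⁻¹' S) :=
      Kernel.measurable_kernel_prodMk_left hS
    have hae : (fun t => Pm.condKernel t (Prod.mk t ⁻¹' S)) =ᵐ[ν] 0 :=
      (lintegral_eq_zero_iff hmeasf).mp hint
    have haeη : (fun t => Pm.condKernel t (Prod.mk t ⁻¹' S)) =ᵐ[η] 0 :=
      hae.filter_mono hην.ae_le
    have hTm : MeasurableSet
        {ζ : Circle × ((Fin m → Circle) × (Fin n → Circle)) | (ζ.1, ζ.2.1) ∈ S} :=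
      (measurable_fst.prodMk hpu) hS
    rw [hQ_def, Measure.compProd_apply hTm]
    have hsec : ∀ t, κ t (Prod.mk t ⁻¹'
        {ζ : Circle × ((Fin m → Circle) × (Fin n → Circle)) | (ζ.1, ζ.2.1) ∈ S})
        = Pm.condKernel t (Prod.mk t ⁻¹' S) := by
      intro t
      have h1 : Prod.mk t ⁻¹'
          {ζ : Circle × ((Fin m → Circle) × (Fin n → Circle)) | (ζ.1, ζ.2.1) ∈ S}
          = (Prod.mk t ⁻¹' S) ×ˢ Set.univ := by
        ext p
        simp [Set.mem_prod]
      rw [hκ_def, h1, Kernel.prod_apply, Measure.prod_prod, measure_univ, mul_one]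
    simp_rw [hsec]
    rw [lintegral_congr_ae haeη]
    simp
  have key_n : ∀ S : Set (Circle × (Fin n → Circle)), MeasurableSet S → Pn S = 0 →
      Q {ζ : Circle × ((Fin m → Circle) × (Fin n → Circle)) | (ζ.1, ζ.2.2) ∈ S} = 0 := by
    intro S hS hS0
    have hint : ∫⁻ t, Pn.condKernel t (Prod.mk t ⁻¹' S) ∂νn = 0 := by
      rw [← Measure.compProd_apply hS, hdisn]; exact hS0
    have hmeasf : Measurable fun t => Pn.condKernel t (Prod.mk t ⁻¹' S) :=
      Kernel.measurable_kernel_prodMk_left hS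
    have hae : (fun t => Pn.condKernel t (Prod.mk t ⁻¹' S)) =ᵐ[νn] 0 :=
      (lintegral_eq_zero_iff hmeasf).mp hint
    have haeη : (fun t => Pn.condKernel t (Prod.mk t ⁻¹' S)) =ᵐ[η] 0 :=
      hae.filter_mono hηνn.ae_le
    have hTm : MeasurableSet
        {ζ : Circle × ((Fin m → Circle) × (Fin n → Circle)) | (ζ.1, ζ.2.2) ∈ S} :=
      (measurable_fst.prodMk hpw) hS
    rw [hQ_def, Measure.compProd_apply hTm]
    have hsec : ∀ t, κ t (Prod.mk t ⁻¹'
        {ζ : Circle × ((Fin m → Circle) × (Fin n → Circle)) | (ζ.1, ζ.2.2) ∈ S})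
        = Pn.condKernel t (Prod.mk t ⁻¹' S) := by
      intro t
      have h1 : Prod.mk t ⁻¹'
          {ζ : Circle × ((Fin m → Circle) × (Fin n → Circle)) | (ζ.1, ζ.2.2) ∈ S}
          = Set.univ ×ˢ (Prod.mk t ⁻¹' S) := by
        ext p
        simp [Set.mem_prod]
      rw [hκ_def, h1, Kernel.prod_apply, Measure.prod_prod, measure_univ, one_mul]
    simp_rw [hsec]
    rw [lintegral_congr_ae haeη]
    simp
  have hQu : ∀ s : Set (Fin m → Circle), MeasurableSet s → μm s = 0 →
      Q {ζ : Circle × ((Fin m → Circle) × (Fin n → Circle)) | ζ.2.1 ∈ s} = 0 := by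
    intro s hs h0
    have h1 : Pm (Set.univ ×ˢ s) = 0 := by rw [hPm_univ s hs]; exact h0
    have h2 := key_m _ (MeasurableSet.univ.prod hs) h1
    have h3 : {ζ : Circle × ((Fin m → Circle) × (Fin n → Circle)) |
          (ζ.1, ζ.2.1) ∈ Set.univ ×ˢ s}
        = {ζ : Circle × ((Fin m → Circle) × (Fin n → Circle)) | ζ.2.1 ∈ s} := by
      ext ζ; simp
    rwa [h3] at h2
  have hQw : ∀ s : Set (Fin n → Circle), MeasurableSet s → μn s = 0 →
      Q {ζ : Circle × ((Fin m → Circle) × (Fin n → Circle)) | ζ.2.2 ∈ s} = 0 := by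
    intro s hs h0
    have h1 : Pn (Set.univ ×ˢ s) = 0 := by rw [hPn_univ s hs]; exact h0
    have h2 := key_n _ (MeasurableSet.univ.prod hs) h1
    have h3 : {ζ : Circle × ((Fin m → Circle) × (Fin n → Circle)) |
          (ζ.1, ζ.2.2) ∈ Set.univ ×ˢ s}
        = {ζ : Circle × ((Fin m → Circle) × (Fin n → Circle)) | ζ.2.2 ∈ s} := by
      ext ζ; simp
    rwa [h3] at h2
  -- marginals of Q
  set α : Measure (Fin m → Circle) := Q.map (fun ζ => ζ.2.1) with hα_def
  set β : Measure (Fin n → Circle) := Q.map (fun ζ => ζ.2.2) with hβ_def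
  have hαAC : α ≪ μm := by
    refine Measure.AbsolutelyContinuous.mk fun s hs h0 => ?_
    rw [hα_def, Measure.map_apply hpu hs]
    exact hQu s hs h0
  have hβAC : β ≪ μn := by
    refine Measure.AbsolutelyContinuous.mk fun s hs h0 => ?_
    rw [hβ_def, Measure.map_apply hpw hs]
    exact hQw s hs h0
  have hαfin : IsFiniteMeasure α := by rw [hα_def]; exact Q.isFiniteMeasure_map _
  have hβfin : IsFiniteMeasure β := by rw [hβ_def]; exact Q.isFiniteMeasure_map _
  have hACprod : α.prod β ≪ μm.prod μn := hαAC.prod hβAC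
  -- the doubled space
  set Ξ := Q.prod Q with hΞ_def
  -- the events
  set EF1 : Set ((Circle × ((Fin m → Circle) × (Fin n → Circle)))
      × (Circle × ((Fin m → Circle) × (Fin n → Circle)))) :=
    {ω | Fin.append ω.1.2.1 ω.2.2.2 ∈ F} with hEF1_def
  set EF2 : Set ((Circle × ((Fin m → Circle) × (Fin n → Circle)))
      × (Circle × ((Fin m → Circle) × (Fin n → Circle)))) :=
    {ω | Fin.append ω.2.2.1 ω.1.2.2 ∈ F} with hEF2_def
  set ED : Set ((Circle × ((Fin m → Circle) × (Fin n → Circle)))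
      × (Circle × ((Fin m → Circle) × (Fin n → Circle)))) :=
    {ω | ∀ i j, ω.1.2.1 i ≠ ω.2.2.1 j} with hED_def
  set Qc : Set (Circle × ((Fin m → Circle) × (Fin n → Circle))) :=
    {ζ | (∏ i, ζ.2.1 i) * a = ζ.1 ∧ ∏ i, ζ.2.2 i = ζ.1} with hQc_def
  have hg1 : Measurable fun ω : (Circle × ((Fin m → Circle) × (Fin n → Circle)))
      × (Circle × ((Fin m → Circle) × (Fin n → Circle))) => (ω.1.2.1, ω.2.2.2) :=
    (hpu.comp measurable_fst).prodMk (hpw.comp measurable_snd)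
  have hEF1m : MeasurableSet EF1 := ((measurable_append m n).comp hg1) hF
  have hg2 : Measurable fun ω : (Circle × ((Fin m → Circle) × (Fin n → Circle)))
      × (Circle × ((Fin m → Circle) × (Fin n → Circle))) => (ω.2.2.1, ω.1.2.2) :=
    (hpu.comp measurable_snd).prodMk (hpw.comp measurable_fst)
  have hEF2m : MeasurableSet EF2 := ((measurable_append m n).comp hg2) hF
  have hEDm : MeasurableSet ED := by
    have hiff : ED = ⋂ i, ⋂ j, {ω : (Circle × ((Fin m → Circle) × (Fin n → Circle)))
        × (Circle × ((Fin m → Circle) × (Fin n → Circle))) | ω.1.2.1 i = ω.2.2.1 j}ᶜ := by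
      ext ω; simp [hED_def]
    rw [hiff]
    exact MeasurableSet.iInter fun i => MeasurableSet.iInter fun j =>
      (mSetEq ((measurable_pi_apply i).comp (hpu.comp measurable_fst))
        ((measurable_pi_apply j).comp (hpu.comp measurable_snd))).compl
  have hQcm : MeasurableSet Qc :=
    (mSetEq (((measurable_finProd m).comp hpu).mul_const a) measurable_fst).inter
      (mSetEq ((measurable_finProd n).comp hpw) measurable_fst)
  -- Q lives on the constraint set
  have hQQc : Q Qcᶜ = 0 := by
    have hS1m : MeasurableSet {q : Circle × (Fin m → Circle) | (∏ i, q.2 i) * a = q.1} :=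
      mSetEq (((measurable_finProd m).comp measurable_snd).mul_const a) measurable_fst
    have hS2m : MeasurableSet {q : Circle × (Fin n → Circle) | ∏ i, q.2 i = q.1} :=
      mSetEq ((measurable_finProd n).comp measurable_snd) measurable_fst
    have hsub : Qcᶜ ⊆
        {ζ : Circle × ((Fin m → Circle) × (Fin n → Circle)) |
          (ζ.1, ζ.2.1) ∈ {q : Circle × (Fin m → Circle) | (∏ i, q.2 i) * a = q.1}ᶜ}
        ∪ {ζ : Circle × ((Fin m → Circle) × (Fin n → Circle)) |
          (ζ.1, ζ.2.2) ∈ {q : Circle × (Fin n → Circle) | ∏ i, q.2 i = q.1}ᶜ} := by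
      intro ζ hζ
      simp only [hQc_def, Set.mem_compl_iff, Set.mem_setOf_eq, not_and_or] at hζ
      simp only [Set.mem_union, Set.mem_setOf_eq, Set.mem_compl_iff]
      tauto
    refine measure_mono_null hsub (measure_union_null ?_ ?_)
    · refine key_m _ hS1m.compl ?_
      rw [hPm_def, Measure.map_apply hPm_meas hS1m.compl]
      have hempty : (fun u : Fin m → Circle => ((∏ i, u i) * a, u)) ⁻¹'
          {q : Circle × (Fin m → Circle) | (∏ i, q.2 i) * a = q.1}ᶜ = ∅ := by
        ext u; simp
      rw [hempty]
      simp
    · refine key_n _ hS2m.compl ?_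
      rw [hPn_def, Measure.map_apply hPn_meas hS2m.compl]
      have hempty : (fun v : Fin n → Circle => (∏ i, v i, v)) ⁻¹'
          {q : Circle × (Fin n → Circle) | ∏ i, q.2 i = q.1}ᶜ = ∅ := by
        ext v; simp
      rw [hempty]
      simp
  -- F-membership events are almost sure
  have hX : MeasurableSet ((fun p : (Fin m → Circle) × (Fin n → Circle) =>
      Fin.append p.1 p.2) ⁻¹' Fᶜ) := (measurable_append m n) hF.compl
  have hFc0 : (μm.prod μn) ((fun p : (Fin m → Circle) × (Fin n → Circle) =>
      Fin.append p.1 p.2) ⁻¹' Fᶜ) = 0 := by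
    rw [← Measure.map_apply (measurable_append m n) hF.compl, ← pi_map_append σ m n]
    exact (prob_compl_eq_zero_iff hF).mpr hF1
  have hEF1null : Ξ EF1ᶜ = 0 := by
    have h1 : Ξ EF1ᶜ = (α.prod β) ((fun p : (Fin m → Circle) × (Fin n → Circle) =>
        Fin.append p.1 p.2) ⁻¹' Fᶜ) := by
      rw [hα_def, hβ_def, Measure.map_prod_map _ _ hpu hpw,
        Measure.map_apply (hpu.prodMap hpw) hX]
      rfl
    rw [h1]
    exact hACprod hFc0
  have hEF2null : Ξ EF2ᶜ = 0 := by
    have h1 : Ξ EF2ᶜ = (α.prod β) ((fun p : (Fin m → Circle) × (Fin n → Circle) =>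
        Fin.append p.1 p.2) ⁻¹' Fᶜ) := by
      calc Ξ EF2ᶜ
          = (Q.prod Q) (Prod.swap ⁻¹'
            ((Prod.map (fun ζ : Circle × ((Fin m → Circle) × (Fin n → Circle)) => ζ.2.1)
              (fun ζ : Circle × ((Fin m → Circle) × (Fin n → Circle)) => ζ.2.2)) ⁻¹'
              ((fun p : (Fin m → Circle) × (Fin n → Circle) => Fin.append p.1 p.2) ⁻¹' Fᶜ))) := rfl
        _ = ((Q.prod Q).map Prod.swap)
            ((Prod.map (fun ζ : Circle × ((Fin m → Circle) × (Fin n → Circle)) => ζ.2.1)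
              (fun ζ : Circle × ((Fin m → Circle) × (Fin n → Circle)) => ζ.2.2)) ⁻¹'
              ((fun p : (Fin m → Circle) × (Fin n → Circle) => Fin.append p.1 p.2) ⁻¹' Fᶜ)) :=
            (Measure.map_apply measurable_swap ((hpu.prodMap hpw) hX)).symm
        _ = (Q.prod Q)
            ((Prod.map (fun ζ : Circle × ((Fin m → Circle) × (Fin n → Circle)) => ζ.2.1)
              (fun ζ : Circle × ((Fin m → Circle) × (Fin n → Circle)) => ζ.2.2)) ⁻¹'
              ((fun p : (Fin m → Circle) × (Fin n → Circle) => Fin.append p.1 p.2) ⁻¹' Fᶜ)) := by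
            rw [Measure.prod_swap]
        _ = (α.prod β) ((fun p : (Fin m → Circle) × (Fin n → Circle) =>
            Fin.append p.1 p.2) ⁻¹' Fᶜ) := by
            rw [hα_def, hβ_def, Measure.map_prod_map _ _ hpu hpw,
              Measure.map_apply (hpu.prodMap hpw) hX]
    rw [h1]
    exact hACprod hFc0
  have hEDnull : Ξ EDᶜ = 0 := by
    have hiff : EDᶜ = ⋃ i, ⋃ j, {ω : (Circle × ((Fin m → Circle) × (Fin n → Circle)))
        × (Circle × ((Fin m → Circle) × (Fin n → Circle))) | ω.1.2.1 i = ω.2.2.1 j} := by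
      ext ω; simp [hED_def]
    rw [hiff]
    refine measure_iUnion_null fun i => measure_iUnion_null fun j => ?_
    have hpm : MeasurableSet {p : (Fin m → Circle) × (Fin m → Circle) | p.1 i = p.2 j} :=
      mSetEq ((measurable_pi_apply i).comp measurable_fst)
        ((measurable_pi_apply j).comp measurable_snd)
    have hmap2 : Ξ.map (Prod.map (fun ζ : Circle × ((Fin m → Circle) × (Fin n → Circle)) => ζ.2.1)
        (fun ζ : Circle × ((Fin m → Circle) × (Fin n → Circle)) => ζ.2.1)) = α.prod α := by
      rw [hΞ_def, hα_def, ← Measure.map_prod_map _ _ hpu hpu]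
    have h1 : Ξ {ω : (Circle × ((Fin m → Circle) × (Fin n → Circle)))
        × (Circle × ((Fin m → Circle) × (Fin n → Circle))) | ω.1.2.1 i = ω.2.2.1 j}
        = (α.prod α) {p : (Fin m → Circle) × (Fin m → Circle) | p.1 i = p.2 j} := by
      rw [← hmap2, Measure.map_apply (hpu.prodMap hpu) hpm]
      rfl
    rw [h1, Measure.prod_apply hpm]
    have hz : ∀ u : Fin m → Circle, α {w : Fin m → Circle | u i = w j} = 0 := by
      intro u
      rw [show {w : Fin m → Circle | u i = w j} = {w : Fin m → Circle | w j = u i} from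
        Set.ext fun _ => eq_comm]
      exact hαAC (pi_hyper σ hσ j (u i))
    simp [hz]
  -- the big event
  set Ebig := (EF1 ∩ EF2 ∩ ED) ∩ Qc ×ˢ Qc with hEbig_def
  have hEbigm : MeasurableSet Ebig := ((hEF1m.inter hEF2m).inter hEDm).inter (hQcm.prod hQcm)
  have hEbigc : Ξ Ebigᶜ = 0 := by
    have hsub : Ebigᶜ ⊆ EF1ᶜ ∪ EF2ᶜ ∪ EDᶜ ∪ (Qcᶜ ×ˢ Set.univ ∪ Set.univ ×ˢ Qcᶜ) := by
      intro ω hω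
      simp only [hEbig_def, Set.mem_compl_iff, Set.mem_inter_iff, not_and_or, Set.mem_union,
        Set.mem_prod, Set.mem_univ, and_true, true_and] at hω ⊢
      tauto
    refine measure_mono_null hsub ?_
    refine measure_union_null (measure_union_null (measure_union_null hEF1null hEF2null) hEDnull)
      (measure_union_null ?_ ?_)
    · rw [hΞ_def, Measure.prod_prod, hQQc, zero_mul]
    · rw [hΞ_def, Measure.prod_prod, hQQc, mul_zero]
  have hQuniv : Q Set.univ = η Set.univ := by
    rw [hQ_def, Measure.compProd_apply MeasurableSet.univ]
    simp only [Set.preimage_univ, measure_univ, lintegral_one]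
  have hηuniv : η Set.univ ≠ 0 := by
    simpa [Measure.measure_univ_eq_zero] using hη0
  have hQ0 : Q ≠ 0 := by
    intro h0
    apply hηuniv
    rw [← hQuniv, h0]
    simp
  have hΞuniv : Ξ Set.univ ≠ 0 := by
    rw [hΞ_def, ← Set.univ_prod_univ, Measure.prod_prod, hQuniv]
    exact mul_ne_zero hηuniv hηuniv
  -- the pointwise consequence on the big event
  have main : ∀ ω : (Circle × ((Fin m → Circle) × (Fin n → Circle)))
      × (Circle × ((Fin m → Circle) × (Fin n → Circle))), ω ∈ Ebig →
      ∃ W : Multiset Circle, M ω.2.2.2 = M ω.2.2.1 + W ∧ M ω.1.2.2 = M ω.1.2.1 + W := by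
    rintro ω ⟨⟨⟨h1, h2⟩, hd⟩, hqc1, hqc2⟩
    obtain ⟨hqa1, hqb1⟩ := hqc1
    obtain ⟨hqa2, hqb2⟩ := hqc2
    have hx : Fin.append ω.1.2.1 ω.2.2.2 ∈ F := h1
    have hy : Fin.append ω.2.2.1 ω.1.2.2 ∈ F := h2
    have hprod : ∏ i, Fin.append ω.1.2.1 ω.2.2.2 i = ∏ i, Fin.append ω.2.2.1 ω.1.2.2 i := by
      have hc : (∏ i, Fin.append ω.1.2.1 ω.2.2.2 i) * a
          = (∏ i, Fin.append ω.2.2.1 ω.1.2.2 i) * a := by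
        rw [prod_append, prod_append]
        calc (∏ i, ω.1.2.1 i) * (∏ i, ω.2.2.2 i) * a
            = ((∏ i, ω.1.2.1 i) * a) * (∏ i, ω.2.2.2 i) := by rw [mul_right_comm]
          _ = ω.1.1 * ω.2.1 := by rw [hqa1, hqb2]
          _ = ((∏ i, ω.2.2.1 i) * a) * (∏ i, ω.1.2.2 i) := by
              rw [hqa2, hqb1]; exact mul_comm _ _
          _ = (∏ i, ω.2.2.1 i) * (∏ i, ω.1.2.2 i) * a := by rw [mul_right_comm]
      exact mul_right_cancel hc
    obtain ⟨π, hπ⟩ := hcon _ hx _ hy hprod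
    have hM : M (Fin.append ω.2.2.1 ω.1.2.2) = M (Fin.append ω.1.2.1 ω.2.2.2) := M_perm π hπ
    rw [M_append, M_append] at hM
    exact key_multiset hd hM
  -- conclude
  rcases eq_or_lt_of_le hmn with heq | hlt
  · -- case m = n : derive a = 1
    have hEbigpos : Ξ Ebig ≠ 0 := by
      intro h0
      apply hΞuniv
      refine le_antisymm ?_ zero_le
      calc Ξ Set.univ = Ξ (Ebig ∪ Ebigᶜ) := by rw [Set.union_compl_self]
        _ ≤ Ξ Ebig + Ξ Ebigᶜ := measure_union_le _ _
        _ = 0 := by rw [h0, hEbigc, add_zero]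
    obtain ⟨ω, hω⟩ := nonempty_of_measure_ne_zero hEbigpos
    obtain ⟨W, hW1, hW2⟩ := main ω hω
    have hcard : n = m + Multiset.card W := by
      have hc := congrArg Multiset.card hW1
      rwa [card_M, Multiset.card_add, card_M] at hc
    have hW0 : W = 0 := by
      have : Multiset.card W = 0 := by omega
      exact Multiset.card_eq_zero.mp this
    rw [hW0, add_zero] at hW1
    have hprodeq : ∏ i, ω.2.2.2 i = ∏ i, ω.2.2.1 i := by
      rw [← prod_M, ← prod_M, hW1]
    obtain ⟨hqa2, hqb2⟩ := hω.2.2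
    have ha1 : a = 1 := by
      have hc : (∏ i, ω.2.2.1 i) * a = (∏ i, ω.2.2.1 i) * 1 := by
        rw [mul_one, hqa2, ← hqb2, hprodeq]
      exact mul_left_cancel hc
    exact hma ⟨heq, ha1⟩
  · -- case m < n
    haveI : (ae Q).NeBot := ae_neBot.mpr hQ0
    have hsec : (fun ζ => Q (Prod.mk ζ ⁻¹' Ebigᶜ)) =ᵐ[Q] 0 :=
      (Measure.measure_prod_null hEbigm.compl).mp hEbigc
    obtain ⟨ζ₁, hζ₁⟩ := hsec.exists
    simp only [Pi.zero_apply] at hζ₁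
    set S := Prod.mk ζ₁ ⁻¹' Ebig with hS_def
    have hSm : MeasurableSet S := hEbigm.preimage measurable_prodMk_left
    have hScnull : Q Sᶜ = 0 := hζ₁
    have hSpos : Q S ≠ 0 := by
      intro h0
      apply hQ0
      refine Measure.measure_univ_eq_zero.mp ?_
      refine le_antisymm ?_ zero_le
      calc Q Set.univ = Q (S ∪ Sᶜ) := by rw [Set.union_compl_self]
        _ ≤ Q S + Q Sᶜ := measure_union_le _ _
        _ = 0 := by rw [h0, hScnull, add_zero]
    obtain ⟨ζ₂, hζ₂⟩ := nonempty_of_measure_ne_zero hSpos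
    obtain ⟨W, hW1, hW2⟩ := main (ζ₁, ζ₂) hζ₂
    have hcard : n = m + Multiset.card W := by
      have hc := congrArg Multiset.card hW1
      rwa [card_M, Multiset.card_add, card_M] at hc
    have hWne : W ≠ 0 := by
      intro h0
      rw [h0, Multiset.card_zero] at hcard
      omega
    obtain ⟨w₀, hw₀⟩ := Multiset.exists_mem_of_ne_zero hWne
    have hfix : ∀ ζ, ζ ∈ S → ∃ i, ζ.2.2 i = w₀ := by
      intro ζ hζ
      obtain ⟨W', hW1', hW2'⟩ := main (ζ₁, ζ) hζ
      have hWW : W' = W := add_left_cancel (hW2'.symm.trans hW2)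
      have hmem : w₀ ∈ M ζ.2.2 := by
        rw [hW1', hWW]
        exact Multiset.mem_add.mpr (Or.inr hw₀)
      exact mem_M.mp hmem
    have hZ : Q {ζ : Circle × ((Fin m → Circle) × (Fin n → Circle)) | ∃ i, ζ.2.2 i = w₀} = 0 := by
      have hiff : {ζ : Circle × ((Fin m → Circle) × (Fin n → Circle)) | ∃ i, ζ.2.2 i = w₀}
          = ⋃ i, {ζ : Circle × ((Fin m → Circle) × (Fin n → Circle)) | ζ.2.2 i = w₀} := by
        ext ζ; simp
      rw [hiff]
      refine measure_iUnion_null fun i => ?_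
      exact hQw _ (mSetEq (measurable_pi_apply i) measurable_const) (pi_hyper σ hσ i w₀)
    apply hSpos
    refine le_antisymm ?_ zero_le
    calc Q S ≤ Q {ζ : Circle × ((Fin m → Circle) × (Fin n → Circle)) | ∃ i, ζ.2.2 i = w₀} :=
      measure_mono fun ζ hζ => hfix ζ hζ
      _ = 0 := hZ
end

section
/- Let σ be an atomless probability Borel measure on 𝕋, n ≥ 1 and q ≥ 2. Suppose that for every Borel set F ⊆ 𝕋ⁿ with σ^{⊗n}(F) = 1 there exist s ∈ 𝕋 and q points x₁, …, x_q ∈ F, pairwise not related by coordinate permutations, with C_n(xᵢ) = s for all i (where C_n is the product of coordinates). Then for every Borel set E ⊆ 𝕋^{2n} with σ^{⊗2n}(E) = 1 there exist t ∈ 𝕋 and q² points in E, pairwise not related by coordinate permutations, all having product of coordinates equal to t. -/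
open MeasureTheory

/-- Let `σ` be an atomless probability Borel measure on the circle, `n ≥ 1`, `q ≥ 2`.
Suppose every Borel set `F ⊆ 𝕋ⁿ` of full `σ^{⊗n}`-measure contains `q` points, pairwise
not related by coordinate permutations, with equal products of coordinates. Then every
Borel set `E ⊆ 𝕋^{2n}` of full `σ^{⊗2n}`-measure contains `q²` points, pairwise not
related by coordinate permutations, with equal products of coordinates. -/
theorem stmt12 (σ : Measure Circle) [IsProbabilityMeasure σ]
    (hσ : ∀ x : Circle, σ {x} = 0) (n q : ℕ) (hn : 1 ≤ n) (hq : 2 ≤ q)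
    (hyp : ∀ F : Set (Fin n → Circle), MeasurableSet F →
      Measure.pi (fun _ : Fin n => σ) F = 1 →
      ∃ s : Circle, ∃ x : Fin q → (Fin n → Circle),
        (∀ i, x i ∈ F) ∧ (∀ i, ∏ j, x i j = s) ∧
        (∀ i i', i ≠ i' → ¬ ∃ π : Equiv.Perm (Fin n), ∀ j, x i' j = x i (π j))) :
    ∀ E : Set (Fin (2 * n) → Circle), MeasurableSet E →
      Measure.pi (fun _ : Fin (2 * n) => σ) E = 1 →
      ∃ t : Circle, ∃ y : Fin (q * q) → (Fin (2 * n) → Circle),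
        (∀ i, y i ∈ E) ∧ (∀ i, ∏ j, y i j = t) ∧
        (∀ i i', i ≠ i' →
          ¬ ∃ π : Equiv.Perm (Fin (2 * n)), ∀ j, y i' j = y i (π j)) := by
  intro E hE hE1
  classical
  set ν : Measure (Fin n → Circle) := Measure.pi (fun _ : Fin n => σ) with hν
  let g : (Fin n ⊕ Fin n) ≃ Fin (2 * n) := finSumFinEquiv.trans (finCongr (two_mul n).symm)
  let e1 := MeasurableEquiv.piCongrLeft (fun _ : Fin (2 * n) => Circle) g
  let e2 := MeasurableEquiv.sumPiEquivProdPi (fun _ : Fin n ⊕ Fin n => Circle)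
  let Φ : (Fin n → Circle) × (Fin n → Circle) → (Fin (2 * n) → Circle) :=
    fun p => e1 (e2.symm p)
  have hΦ : MeasurePreserving Φ (ν.prod ν) (Measure.pi fun _ : Fin (2 * n) => σ) :=
    (measurePreserving_piCongrLeft (fun _ => σ) g).comp
      (measurePreserving_sumPiEquivProdPi_symm (fun _ => σ))
  have hΦ_apply : ∀ (u v : Fin n → Circle) (a : Fin n ⊕ Fin n),
      Φ (u, v) (g a) = Sum.elim u v a := by
    intro u v a
    have h2 : e2.symm (u, v) = Sum.elim u v := by ext (k | k) <;> rfl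
    show e1 (e2.symm (u, v)) (g a) = _
    rw [h2]
    show (MeasurableEquiv.piCongrLeft (fun _ : Fin (2 * n) => Circle) g)
      (Sum.elim u v) (g a) = Sum.elim u v a
    rw [MeasurableEquiv.coe_piCongrLeft]
    exact Equiv.piCongrLeft_apply_apply (P := fun _ : Fin (2 * n) => Circle) (e := g)
      (Sum.elim u v) a
  set E' : Set ((Fin n → Circle) × (Fin n → Circle)) := Φ ⁻¹' E with hE'def
  have hE'meas : MeasurableSet E' := hΦ.measurable hE
  have hE'1 : (ν.prod ν) E' = 1 := by
    rw [hE'def, hΦ.measure_preimage hE.nullMeasurableSet, hE1]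
  -- slices
  set A : Set (Fin n → Circle) := {u | ν (Prod.mk u ⁻¹' E') = 1} with hAdef
  have hAmeas : MeasurableSet A :=
    measurable_measure_prodMk_left hE'meas (measurableSet_singleton 1)
  have hA1 : ν A = 1 := by
    have hcompl : (ν.prod ν) E'ᶜ = 0 :=
      (prob_compl_eq_zero_iff hE'meas).mpr hE'1
    have hae := Measure.measure_ae_null_of_prod_null hcompl
    have hmem : ∀ᵐ u ∂ν, u ∈ A := by
      filter_upwards [hae] with u hu
      have : ν (Prod.mk u ⁻¹' E')ᶜ = 0 := hu
      exact (prob_compl_eq_zero_iff (measurable_prodMk_left hE'meas)).mp this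
    have : ν Aᶜ = 0 := by
      have := ae_iff.mp hmem
      exact this
    exact (prob_compl_eq_zero_iff hAmeas).mp this
  obtain ⟨s, x, hxA, hxprod, hxperm⟩ := hyp A hAmeas hA1
  -- common fibre
  set B : Set (Fin n → Circle) := ⋂ i, Prod.mk (x i) ⁻¹' E' with hBdef
  have hBmeas : MeasurableSet B :=
    MeasurableSet.iInter fun i => measurable_prodMk_left hE'meas
  have hBc : ν Bᶜ = 0 := by
    rw [hBdef, Set.compl_iInter]
    refine measure_iUnion_null fun i => ?_
    exact (prob_compl_eq_zero_iff (measurable_prodMk_left hE'meas)).mpr (hxA i)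
  -- avoid coordinates of the x's
  have : NullSingletonClass σ := ⟨hσ⟩
  set S : Finset Circle := Finset.image (fun p : Fin q × Fin n => x p.1 p.2) Finset.univ
    with hSdef
  have hSmeas : MeasurableSet (↑S : Set Circle) := S.measurableSet
  have hS0 : σ (↑S : Set Circle) = 0 := S.countable_toSet.measure_zero σ
  set G : Set (Fin n → Circle) := ⋂ j, (fun v => v j) ⁻¹' (↑S : Set Circle)ᶜ with hGdef
  have hGmeas : MeasurableSet G :=
    MeasurableSet.iInter fun j => (measurable_pi_apply j) hSmeas.compl
  have hGc : ν Gᶜ = 0 := by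
    rw [hGdef, Set.compl_iInter]
    refine measure_iUnion_null fun j => ?_
    have hset : ((fun v : Fin n → Circle => v j) ⁻¹' (↑S : Set Circle)ᶜ)ᶜ =
        Set.pi Set.univ (fun k => if k = j then (↑S : Set Circle) else Set.univ) := by
      ext v
      simp only [Set.mem_compl_iff, Set.mem_preimage, not_not, Set.mem_pi, Set.mem_univ,
        true_implies]
      constructor
      · intro h k
        split
        · next hk => subst hk; exact h
        · exact Set.mem_univ _
      · intro h
        have := h j
        simpa using this
    rw [hset, hν, Measure.pi_pi]
    refine Finset.prod_eq_zero (Finset.mem_univ j) ?_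
    simpa using hS0
  have hBG : MeasurableSet (B ∩ G) := hBmeas.inter hGmeas
  have hBG1 : ν (B ∩ G) = 1 := by
    refine (prob_compl_eq_zero_iff hBG).mp ?_
    rw [Set.compl_inter]
    exact le_antisymm (le_trans (measure_union_le _ _) (by rw [hBc, hGc]; simp)) zero_le
  obtain ⟨r, y, hyBG, hyprod, hyperm⟩ := hyp (B ∩ G) hBG hBG1
  have hxS : ∀ i k, x i k ∈ (↑S : Set Circle) := by
    intro i k
    rw [hSdef]
    exact Finset.mem_coe.mpr (Finset.mem_image.mpr ⟨(i, k), Finset.mem_univ _, rfl⟩)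
  have hyS : ∀ j m, y j m ∉ (↑S : Set Circle) := by
    intro j m
    have := (hyBG j).2
    rw [hGdef] at this
    exact Set.mem_iInter.mp this m
  set d : Fin (q * q) ≃ Fin q × Fin q := finProdFinEquiv.symm with hddef
  refine ⟨s * r, fun c => Φ (x (d c).1, y (d c).2), ?_, ?_, ?_⟩
  · intro c
    have hyB : y (d c).2 ∈ B := (hyBG (d c).2).1
    rw [hBdef] at hyB
    exact Set.mem_iInter.mp hyB (d c).1
  · intro c
    calc (∏ k, Φ (x (d c).1, y (d c).2) k)
        = ∏ a : Fin n ⊕ Fin n, Φ (x (d c).1, y (d c).2) (g a) :=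
          (Equiv.prod_comp g _).symm
      _ = ∏ a : Fin n ⊕ Fin n, Sum.elim (x (d c).1) (y (d c).2) a :=
          Fintype.prod_congr _ _ fun a => hΦ_apply _ _ a
      _ = (∏ k, x (d c).1 k) * (∏ m, y (d c).2 m) := Fintype.prod_sum_type _
      _ = s * r := by rw [hxprod, hyprod]
  · intro c c' hcc'
    rintro ⟨π, hπ⟩
    have hkey : ∀ a, Sum.elim (x (d c').1) (y (d c').2) a =
        Sum.elim (x (d c).1) (y (d c).2) (g.symm (π (g a))) := by
      intro a
      have h1 : Φ (x (d c').1, y (d c').2) (g a) =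
          Φ (x (d c).1, y (d c).2) (π (g a)) := hπ (g a)
      rw [hΦ_apply] at h1
      have h2 : Φ (x (d c).1, y (d c).2) (π (g a)) =
          Sum.elim (x (d c).1) (y (d c).2) (g.symm (π (g a))) := by
        conv_lhs => rw [← g.apply_symm_apply (π (g a))]
        exact hΦ_apply _ _ _
      rw [← h2]
      exact h1
    have hinj : Function.Injective (fun a : Fin n ⊕ Fin n => g.symm (π (g a))) :=
      g.symm.injective.comp (π.injective.comp g.injective)
    have hL : ∀ k, ∃ k', g.symm (π (g (Sum.inl k))) = Sum.inl k' := by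
      intro k
      rcases h : g.symm (π (g (Sum.inl k))) with k' | m
      · exact ⟨k', rfl⟩
      · exfalso
        have := hkey (Sum.inl k)
        rw [h] at this
        simp only [Sum.elim_inl, Sum.elim_inr] at this
        exact hyS (d c).2 m (this ▸ hxS (d c').1 k)
    have hR : ∀ m, ∃ m', g.symm (π (g (Sum.inr m))) = Sum.inr m' := by
      intro m
      rcases h : g.symm (π (g (Sum.inr m))) with k | m'
      · exfalso
        have := hkey (Sum.inr m)
        rw [h] at this
        simp only [Sum.elim_inl, Sum.elim_inr] at this
        exact hyS (d c').2 m (this ▸ hxS (d c).1 k)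
      · exact ⟨m', rfl⟩
    choose f1 hf1 using hL
    choose f2 hf2 using hR
    have hf1inj : Function.Injective f1 := by
      intro a b hab
      have : g.symm (π (g (Sum.inl a))) = g.symm (π (g (Sum.inl b))) := by
        rw [hf1, hf1, hab]
      have := hinj this
      exact Sum.inl.inj this
    have hf2inj : Function.Injective f2 := by
      intro a b hab
      have : g.symm (π (g (Sum.inr a))) = g.symm (π (g (Sum.inr b))) := by
        rw [hf2, hf2, hab]
      have := hinj this
      exact Sum.inr.inj this
    have hxrel : ∀ k, x (d c').1 k = x (d c).1 (f1 k) := by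
      intro k
      have := hkey (Sum.inl k)
      rw [hf1 k] at this
      simpa using this
    have hyrel : ∀ m, y (d c').2 m = y (d c).2 (f2 m) := by
      intro m
      have := hkey (Sum.inr m)
      rw [hf2 m] at this
      simpa using this
    have hi : (d c).1 = (d c').1 := by
      by_contra h
      exact hxperm _ _ h
        ⟨Equiv.ofBijective f1 (Finite.injective_iff_bijective.mp hf1inj), hxrel⟩
    have hj : (d c).2 = (d c').2 := by
      by_contra h
      exact hyperm _ _ h
        ⟨Equiv.ofBijective f2 (Finite.injective_iff_bijective.mp hf2inj), hyrel⟩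
    exact hcc' (d.injective (Prod.ext hi hj))
end

section
/- Let m, n ≥ 1 and let G = S(m)ⁿ act on the index set {1, …, n} × {1, …, m} by (π₁, …, πₙ)·(i, j) = (i, πᵢ(j)). Let z : {1,…,n} × {1,…,m} → 𝕋 be such that the products z(1, j₁)·z(2, j₂)⋯z(n, jₙ) are pairwise distinct as (j₁, …, jₙ) ranges over {1, …, m}ⁿ. Then the (m!)ⁿ points of 𝕋^m given, for π = (π₁,…,πₙ) ∈ G, by w_π = (Πᵢ₌₁ⁿ z(i, πᵢ(1)), Πᵢ₌₁ⁿ z(i, πᵢ(2)), …, Πᵢ₌₁ⁿ z(i, πᵢ(m))) are pairwise distinct, and they all have the same product of coordinates, namely Πᵢ₌₁ⁿ Πⱼ₌₁ᵐ z(i, j). -/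
/-- Let `G = S(m)ⁿ` and `z : {1,…,n} × {1,…,m} → 𝕋` be such that the products
`z(1,j₁)⋯z(n,jₙ)` are pairwise distinct as `(j₁,…,jₙ)` ranges over `{1,…,m}ⁿ`. Then the
`(m!)ⁿ` points `w_π = (∏ᵢ z(i, πᵢ(1)), …, ∏ᵢ z(i, πᵢ(m)))`, `π ∈ G`, of `𝕋^m` are
pairwise distinct and all have product of coordinates `∏ᵢ∏ⱼ z(i,j)`. -/
theorem stmt13 (n m : ℕ) (hn : 1 ≤ n) (hm : 1 ≤ m) (z : Fin n → Fin m → Circle)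
    (hz : ∀ j j' : Fin n → Fin m,
      (∏ i, z i (j i)) = (∏ i, z i (j' i)) → j = j') :
    Function.Injective
      (fun (π : Fin n → Equiv.Perm (Fin m)) => fun j : Fin m => ∏ i, z i (π i j)) ∧
    ∀ π : Fin n → Equiv.Perm (Fin m),
      (∏ j, ∏ i, z i (π i j)) = ∏ i, ∏ j, z i j := by
  constructor
  · intro π π' h
    funext i
    ext j
    have hj := congrFun h j
    simp only at hj
    have := hz (fun i => π i j) (fun i => π' i j) hj
    exact congrArg Fin.val (congrFun this i)
  · intro π
    rw [Finset.prod_comm]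
    exact Finset.prod_congr rfl fun i _ => (Equiv.prod_comp (π i) (z i))
end
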